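/- Let u ∈ ℝ^n satisfy ∑_{j=1}^n u_j = n and 3/4 ≤ u_j ≤ 5/4 for all j. Then 1.8·n·δ(u) ≤ Δ21(u) ≤ (9/2)·n·δ(u), and Δ22(u) ≤ 5·n·δ(u). -/

import Mathlib

/-- The entropy proximity measure `δ(u) = (1/n) ∑ u_j ln u_j`. -/
noncomputable def entropyDelta (n : ℕ) (u : Fin n → ℝ) : ℝ :=
  (1 / (n : ℝ)) * ∑ j, u j * Real.log (u j)

/-- `Δ21(u) = ∑ u_j² ln u_j`. -/
noncomputable def Delta21 (n : ℕ) (u : Fin n → ℝ) : ℝ :=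
  ∑ j, (u j) ^ 2 * Real.log (u j)

/-- `Δ22(u) = ∑ u_j² ln² u_j`. -/
noncomputable def Delta22 (n : ℕ) (u : Fin n → ℝ) : ℝ :=
  ∑ j, (u j) ^ 2 * Real.log (u j) ^ 2

private lemma monoA : MonotoneOn (fun y : ℝ => (y + 1) * Real.log y - 2 * (y - 1))
    (Set.Ioi (0 : ℝ)) := by
  have hd : ∀ x ∈ Set.Ioi (0 : ℝ),
      HasDerivAt (fun y : ℝ => (y + 1) * Real.log y - 2 * (y - 1))
        (1 * Real.log x + (x + 1) * x⁻¹ - 2 * 1) x := by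
    intro x hx
    have h1 : HasDerivAt (fun y : ℝ => y + 1) 1 x := (hasDerivAt_id x).add_const 1
    have h2 := Real.hasDerivAt_log (ne_of_gt hx)
    have h3 : HasDerivAt (fun y : ℝ => y - 1) 1 x := (hasDerivAt_id x).sub_const 1
    exact (h1.mul h2).sub (h3.const_mul 2)
  apply monotoneOn_of_deriv_nonneg (convex_Ioi 0)
  · intro x hx
    exact ((hd x hx).continuousAt).continuousWithinAt
  · rw [interior_Ioi]
    intro x hx
    exact (hd x hx).differentiableAt.differentiableWithinAt
  · rw [interior_Ioi]
    intro x hx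
    rw [(hd x hx).deriv]
    have hx0 : (0 : ℝ) < x := hx
    have h := Real.one_sub_inv_le_log_of_pos hx0
    have hxne : x ≠ 0 := ne_of_gt hx0
    have : (x + 1) * x⁻¹ = 1 + x⁻¹ := by field_simp
    rw [this]
    nlinarith [h]

private lemma monoB : MonotoneOn (fun y : ℝ => y ^ 2 - 1 - 2 * (y * Real.log y))
    (Set.Ioi (0 : ℝ)) := by
  have hd : ∀ x ∈ Set.Ioi (0 : ℝ),
      HasDerivAt (fun y : ℝ => y ^ 2 - 1 - 2 * (y * Real.log y))
        (2 * x ^ 1 - 2 * (1 * Real.log x + x * x⁻¹)) x := by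
    intro x hx
    have h1 : HasDerivAt (fun y : ℝ => y ^ 2 - 1) (2 * x ^ 1) x := by
      simpa using ((hasDerivAt_pow 2 x).sub_const 1)
    have h2 := (hasDerivAt_id x).mul (Real.hasDerivAt_log (ne_of_gt hx))
    exact h1.sub (h2.const_mul 2)
  apply monotoneOn_of_deriv_nonneg (convex_Ioi 0)
  · intro x hx
    exact ((hd x hx).continuousAt).continuousWithinAt
  · rw [interior_Ioi]
    intro x hx
    exact (hd x hx).differentiableAt.differentiableWithinAt
  · rw [interior_Ioi]
    intro x hx
    rw [(hd x hx).deriv]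
    have hx0 : (0 : ℝ) < x := hx
    have h := Real.log_le_sub_one_of_pos hx0
    have : x * x⁻¹ = 1 := mul_inv_cancel₀ (ne_of_gt hx0)
    rw [this]
    nlinarith [h]

private lemma lemA1 {x : ℝ} (hx : 1 ≤ x) : 2 * (x - 1) ≤ (x + 1) * Real.log x := by
  have h := monoA (Set.mem_Ioi.2 one_pos) (Set.mem_Ioi.2 (lt_of_lt_of_le one_pos hx)) hx
  simpa [Real.log_one] using h

private lemma lemA2 {x : ℝ} (hx0 : 0 < x) (hx : x ≤ 1) : (x + 1) * Real.log x ≤ 2 * (x - 1) := by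
  have h := monoA (Set.mem_Ioi.2 hx0) (Set.mem_Ioi.2 one_pos) hx
  simp only [Real.log_one] at h
  linarith [h]

private lemma lemB1 {x : ℝ} (hx : 1 ≤ x) : 2 * (x * Real.log x) ≤ x ^ 2 - 1 := by
  have h := monoB (Set.mem_Ioi.2 one_pos) (Set.mem_Ioi.2 (lt_of_lt_of_le one_pos hx)) hx
  simp only [Real.log_one] at h
  nlinarith [h]

private lemma lemB2 {x : ℝ} (hx0 : 0 < x) (hx : x ≤ 1) : x ^ 2 - 1 ≤ 2 * (x * Real.log x) := by
  have h := monoB (Set.mem_Ioi.2 hx0) (Set.mem_Ioi.2 one_pos) hx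
  simp only [Real.log_one] at h
  nlinarith [h]

private lemma pt1 {x : ℝ} (h3 : 3 / 4 ≤ x) (h5 : x ≤ 5 / 4) :
    1.8 * (x * Real.log x) - 0.8 * (x - 1) ≤ x ^ 2 * Real.log x := by
  have hx0 : (0 : ℝ) < x := by linarith
  set L := Real.log x with hL
  rcases le_total 1 x with hx1 | hx1
  · have hB := lemB1 hx1
    nlinarith [mul_nonneg (show (0:ℝ) ≤ 1.8 * x - x ^ 2 by nlinarith)
        (show (0:ℝ) ≤ x ^ 2 - 1 - 2 * (x * L) by linarith),
      mul_nonneg (mul_nonneg hx0.le (show (0:ℝ) ≤ x + 0.2 by linarith)) (sq_nonneg (x - 1))]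
  · have hA := lemA2 hx0 hx1
    nlinarith [mul_nonneg (show (0:ℝ) ≤ 1.8 * x - x ^ 2 by nlinarith)
        (show (0:ℝ) ≤ 2 * (x - 1) - (x + 1) * L by linarith),
      mul_nonneg (show (0:ℝ) ≤ x - 0.4 by linarith) (sq_nonneg (x - 1))]

private lemma pt2 {x : ℝ} (h3 : 3 / 4 ≤ x) (h5 : x ≤ 5 / 4) :
    x ^ 2 * Real.log x ≤ 4.5 * (x * Real.log x) - 3.5 * (x - 1) := by
  have hx0 : (0 : ℝ) < x := by linarith
  set L := Real.log x with hL
  rcases le_total 1 x with hx1 | hx1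
  · have hA := lemA1 hx1
    nlinarith [mul_nonneg (show (0:ℝ) ≤ 4.5 * x - x ^ 2 by nlinarith)
        (show (0:ℝ) ≤ (x + 1) * L - 2 * (x - 1) by linarith),
      mul_nonneg (show (0:ℝ) ≤ 3.5 - 2 * x by linarith) (sq_nonneg (x - 1))]
  · have hB := lemB2 hx0 hx1
    nlinarith [mul_nonneg (show (0:ℝ) ≤ 4.5 - x by linarith)
        (show (0:ℝ) ≤ 2 * (x * L) - (x ^ 2 - 1) by linarith),
      mul_nonneg (show (0:ℝ) ≤ 2.5 - x by linarith) (sq_nonneg (x - 1))]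

private lemma pt3 {x : ℝ} (h3 : 3 / 4 ≤ x) (h5 : x ≤ 5 / 4) :
    x ^ 2 * Real.log x ^ 2 ≤ 5 * (x * Real.log x) - 5 * (x - 1) := by
  have hx0 : (0 : ℝ) < x := by linarith
  set L := Real.log x with hL
  rcases le_total 1 x with hx1 | hx1
  · have hA := lemA1 hx1
    have hB := lemB1 hx1
    have hL0 : 0 ≤ L := Real.log_nonneg hx1
    have hsq : 0 ≤ (x ^ 2 - 1 - 2 * (x * L)) * (x ^ 2 - 1 + 2 * (x * L)) := by
      apply mul_nonneg
      · linarith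
      · nlinarith [mul_nonneg hx0.le hL0]
    nlinarith [hsq,
      mul_nonneg (show (0:ℝ) ≤ 20 - (x + 1) ^ 3 by nlinarith) (sq_nonneg (x - 1)),
      mul_nonneg hx0.le (show (0:ℝ) ≤ (x + 1) * L - 2 * (x - 1) by linarith)]
  · have hB := lemB2 hx0 hx1
    have hL0 : L ≤ 0 := Real.log_nonpos (by linarith) hx1
    have hsq : 0 ≤ (2 * (x * L) - (x ^ 2 - 1)) * (1 - x ^ 2 - 2 * (x * L)) := by
      apply mul_nonneg
      · linarith
      · nlinarith [mul_nonpos_of_nonneg_of_nonpos hx0.le hL0]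
    nlinarith [hsq,
      mul_nonneg (show (0:ℝ) ≤ 10 - (x + 1) ^ 2 by nlinarith) (sq_nonneg (x - 1)), hB]

theorem stmt_7 (n : ℕ) (hn : 1 ≤ n) (u : Fin n → ℝ) (hsum : ∑ j, u j = (n : ℝ))
    (hlb : ∀ j, 3 / 4 ≤ u j) (hub : ∀ j, u j ≤ 5 / 4) :
    (1.8 * n * entropyDelta n u ≤ Delta21 n u ∧
      Delta21 n u ≤ (9 / 2) * n * entropyDelta n u) ∧
    Delta22 n u ≤ 5 * n * entropyDelta n u := by
  have hn0 : (n : ℝ) ≠ 0 := by positivity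
  set S : ℝ := ∑ j, u j * Real.log (u j) with hS
  have hED : (n : ℝ) * entropyDelta n u = S := by
    rw [entropyDelta]
    field_simp
    exact hS.symm
  have hsum0 : ∑ j, (u j - 1) = 0 := by
    rw [Finset.sum_sub_distrib, hsum]
    simp
  constructor
  · constructor
    · have key : 1.8 * S - 0.8 * 0 ≤ Delta21 n u := by
        rw [← hsum0, hS, Finset.mul_sum, Finset.mul_sum, ← Finset.sum_sub_distrib, Delta21]
        apply Finset.sum_le_sum
        intro j _
        exact pt1 (hlb j) (hub j)
      calc 1.8 * n * entropyDelta n u = 1.8 * ((n : ℝ) * entropyDelta n u) := by ring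
        _ = 1.8 * S := by rw [hED]
        _ ≤ Delta21 n u := by linarith
    · have key : Delta21 n u ≤ 4.5 * S - 3.5 * 0 := by
        rw [← hsum0, hS, Finset.mul_sum, Finset.mul_sum, ← Finset.sum_sub_distrib, Delta21]
        apply Finset.sum_le_sum
        intro j _
        exact pt2 (hlb j) (hub j)
      calc Delta21 n u ≤ 4.5 * S - 3.5 * 0 := key
        _ = (9 / 2) * ((n : ℝ) * entropyDelta n u) := by rw [hED]; ring
        _ = (9 / 2) * n * entropyDelta n u := by ring
  · have key : Delta22 n u ≤ 5 * S - 5 * 0 := by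
      rw [← hsum0, hS, Finset.mul_sum, Finset.mul_sum, ← Finset.sum_sub_distrib, Delta22]
      apply Finset.sum_le_sum
      intro j _
      exact pt3 (hlb j) (hub j)
    calc Delta22 n u ≤ 5 * S - 5 * 0 := key
      _ = 5 * ((n : ℝ) * entropyDelta n u) := by rw [hED]; ring
      _ = 5 * n * entropyDelta n u := by ring
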